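/- Let (x_i, y_i) ∈ ℝ² × ℝ², i = 1,…,m, be given. The following four statements are equivalent: (1) there exist cameras P₁, P₂ and points w_i ∈ ℝ⁴∖{0} such that (P₁,P₂,{w_i}) is a reconstruction of {(x_i,y_i)}; (2) there exist finite cameras P₁, P₂ and points w_i ∈ ℝ⁴∖{0} forming a reconstruction; (3) there exist finite cameras P₁, P₂ and points w_i ∈ ℝ³ such that (P₁,P₂,{ŵ_i}) is a reconstruction; (4) there exist a finite camera P₂ and points w_i ∈ ℝ³ such that (P₁,P₂,{ŵ_i}) is a reconstruction with P₁ = (I 0), the 3×4 matrix with identity left block and zero last column. -/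

import Mathlib

open Matrix

noncomputable section

/-- For `u ∈ ℝⁿ`, `hat u = (u, 1)ᵀ ∈ ℝⁿ⁺¹`. -/
def hat {n : ℕ} (u : Fin n → ℝ) : Fin (n + 1) → ℝ := Fin.snoc u 1

/-- The 3×4 matrix `(A b)` with left 3×3 block `A` and last column `b`. -/
def cam (A : Matrix (Fin 3) (Fin 3) ℝ) (b : Fin 3 → ℝ) : Matrix (Fin 3) (Fin 4) ℝ :=
  Matrix.of fun i => Fin.snoc (A i) (b i)

/-- The left 3×3 block of a 3×4 matrix. -/
def leftBlock (P : Matrix (Fin 3) (Fin 4) ℝ) : Matrix (Fin 3) (Fin 3) ℝ :=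
  P.submatrix id Fin.castSucc

/-- A (projective) camera is a real 3×4 matrix of rank 3. -/
def IsCamera (P : Matrix (Fin 3) (Fin 4) ℝ) : Prop := P.rank = 3

/-- A finite camera: the left 3×3 block is nonsingular. -/
def IsFiniteCamera (P : Matrix (Fin 3) (Fin 4) ℝ) : Prop := IsUnit (leftBlock P).det

/-- Two cameras are coincident if their camera centers agree up to a nonzero scale;
for rank-3 cameras the center is the (one-dimensional) kernel, so this says the two
cameras share a common nonzero kernel vector. -/
def Coincident (P Q : Matrix (Fin 3) (Fin 4) ℝ) : Prop :=
  ∃ c : Fin 4 → ℝ, c ≠ 0 ∧ P.mulVec c = 0 ∧ Q.mulVec c = 0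

/-- `u` is a nonzero scalar multiple of `v`. -/
def SimEq {n : ℕ} (u v : Fin n → ℝ) : Prop := ∃ c : ℝ, c ≠ 0 ∧ u = c • v

/-- The skew-symmetric matrix `[v]ₓ` with `[v]ₓ w = v × w`. -/
def skew (v : Fin 3 → ℝ) : Matrix (Fin 3) (Fin 3) ℝ :=
  !![0, -v 2, v 1; v 2, 0, -v 0; -v 1, v 0, 0]

/-- `(x, y)` is `(A, b)`-irregular. -/
def Irregular (A : Matrix (Fin 3) (Fin 3) ℝ) (b : Fin 3 → ℝ) (x y : Fin 2 → ℝ) : Prop :=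
  ((skew b * A).mulVec (hat x) = 0 ∧ Matrix.vecMul (hat y) (skew b) ≠ 0) ∨
  ((skew b * A).mulVec (hat x) ≠ 0 ∧ Matrix.vecMul (hat y) (skew b) = 0)

lemma cam_last (A : Matrix (Fin 3) (Fin 3) ℝ) (b : Fin 3 → ℝ) (i : Fin 3) :
    cam A b i (Fin.last 3) = b i := by simp only [cam, Matrix.of_apply, Fin.snoc_last]

lemma leftBlock_cam (A : Matrix (Fin 3) (Fin 3) ℝ) (b : Fin 3 → ℝ) :
    leftBlock (cam A b) = A := by
  ext i j; simp [leftBlock, cam]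

lemma mulVec_snoc (P : Matrix (Fin 3) (Fin 4) ℝ) (u : Fin 3 → ℝ) (t : ℝ) :
    P.mulVec (Fin.snoc u t) = (leftBlock P).mulVec u + t • (fun i => P i (Fin.last 3)) := by
  funext i
  simp only [Matrix.mulVec, dotProduct, Fin.sum_univ_castSucc, Fin.snoc_castSucc,
    Fin.snoc_last, Pi.add_apply, Pi.smul_apply, smul_eq_mul, leftBlock, Matrix.submatrix_apply,
    id_eq]
  ring

lemma camOne_mulVec (z : Fin 4 → ℝ) : (cam 1 0).mulVec z = Fin.init z := by
  conv_lhs => rw [← Fin.snoc_init_self z]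
  rw [mulVec_snoc, leftBlock_cam, Matrix.one_mulVec]
  funext i
  simp only [cam_last]
  simp

lemma hat_ne_zero {n : ℕ} (u : Fin n → ℝ) : hat u ≠ 0 := by
  intro h
  have := congrFun h (Fin.last n)
  simp [hat] at this

lemma camOne_mulVec_hat (z : Fin 3 → ℝ) : (cam 1 0).mulVec (hat z) = z := by
  rw [hat, camOne_mulVec]
  funext i
  simp [Fin.init]

lemma finiteCamera_surj {P : Matrix (Fin 3) (Fin 4) ℝ} (h : IsFiniteCamera P) :
    Function.Surjective P.mulVec := by
  intro z
  refine ⟨Fin.snoc ((leftBlock P)⁻¹.mulVec z) 0, ?_⟩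
  rw [mulVec_snoc, Matrix.mulVec_mulVec, Matrix.mul_nonsing_inv _ h, Matrix.one_mulVec]
  simp

lemma isCamera_of_finite {P : Matrix (Fin 3) (Fin 4) ℝ} (h : IsFiniteCamera P) : IsCamera P := by
  have hs : Function.Surjective P.mulVecLin := by
    intro z
    obtain ⟨c, hc⟩ := finiteCamera_surj h z
    exact ⟨c, hc⟩
  show Matrix.rank P = 3
  rw [Matrix.rank, LinearMap.range_eq_top.2 hs, finrank_top, Module.finrank_fin_fun]

lemma camera_range_top {P : Matrix (Fin 3) (Fin 4) ℝ} (h : IsCamera P) :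
    LinearMap.range P.mulVecLin = ⊤ := by
  apply Submodule.eq_top_of_finrank_eq
  have hr : Module.finrank ℝ (LinearMap.range P.mulVecLin) = 3 := h
  rw [hr, Module.finrank_fin_fun]

lemma camera_surj {P : Matrix (Fin 3) (Fin 4) ℝ} (h : IsCamera P) :
    Function.Surjective P.mulVec := by
  intro z
  obtain ⟨c, hc⟩ := LinearMap.range_eq_top.1 (camera_range_top h) z
  exact ⟨c, hc⟩

lemma camera_ker {P : Matrix (Fin 3) (Fin 4) ℝ} (h : IsCamera P) :
    ∃ k : Fin 4 → ℝ, k ≠ 0 ∧ P.mulVec k = 0 := by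
  have h4 := LinearMap.finrank_range_add_finrank_ker P.mulVecLin
  rw [Module.finrank_fin_fun] at h4
  have hr : Module.finrank ℝ (LinearMap.range P.mulVecLin) = 3 := h
  have hk : LinearMap.ker P.mulVecLin ≠ ⊥ := by
    intro hb
    rw [hr, hb, finrank_bot] at h4
    omega
  obtain ⟨k, hk1, hk2⟩ := (Submodule.ne_bot_iff _).1 hk
  exact ⟨k, hk2, hk1⟩

lemma avoid {ι : Type} [Fintype ι] (a : ι → Fin 3 → ℝ) (β : ι → ℝ)
    (h : ∀ j, a j ≠ 0 ∨ β j ≠ 0) : ∃ v : Fin 3 → ℝ, ∀ j, a j ⬝ᵥ v ≠ β j := by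
  classical
  set p : ι → MvPolynomial (Fin 3) ℝ :=
    fun j => (∑ i, MvPolynomial.C (a j i) * MvPolynomial.X i) - MvPolynomial.C (β j) with hp_def
  have heval : ∀ j v, MvPolynomial.eval v (p j) = a j ⬝ᵥ v - β j := by
    intro j v
    simp [hp_def, dotProduct]
  have hex : ∀ j, ∃ v : Fin 3 → ℝ, a j ⬝ᵥ v ≠ β j := by
    intro j
    rcases h j with ha | hb
    · obtain ⟨i, hi⟩ : ∃ i, a j i ≠ 0 := by
        by_contra hc
        push_neg at hc
        exact ha (funext hc)
      refine ⟨Pi.single i ((β j + 1) / a j i), ?_⟩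
      rw [dotProduct_single, mul_div_cancel₀ _ hi]
      intro he
      simp at he
    · refine ⟨0, ?_⟩
      simpa [dotProduct] using hb.symm
  have hp : ∀ j, p j ≠ 0 := by
    intro j h0
    obtain ⟨v, hv⟩ := hex j
    apply hv
    have := heval j v
    rw [h0, map_zero] at this
    linarith
  have hprod : (∏ j, p j) ≠ 0 := Finset.prod_ne_zero_iff.2 fun j _ => hp j
  have hvex : ∃ v, MvPolynomial.eval v (∏ j, p j) ≠ 0 := by
    by_contra hc
    push_neg at hc
    exact hprod (MvPolynomial.funext fun v => by simpa using hc v)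
  obtain ⟨v, hv⟩ := hvex
  refine ⟨v, fun j => ?_⟩
  have hj : MvPolynomial.eval v (p j) ≠ 0 := by
    intro h0
    exact hv (by rw [map_prod]; exact Finset.prod_eq_zero (Finset.mem_univ j) h0)
  rw [heval] at hj
  intro he
  exact hj (by rw [he]; ring)

lemma normalizeCam (Q : Matrix (Fin 3) (Fin 4) ℝ) (hQs : Function.Surjective Q.mulVec)
    (κ : Fin 4 → ℝ) (hκQ : Q.mulVec κ = 0) (hκ0 : κ ≠ 0)
    (m : ℕ) (x y : Fin m → Fin 2 → ℝ) (ω : Fin m → Fin 4 → ℝ)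
    (hx : ∀ i, SimEq (Fin.init (ω i)) (hat (x i)))
    (hy : ∀ i, SimEq (Q.mulVec (ω i)) (hat (y i))) :
    ∃ P₂ : Matrix (Fin 3) (Fin 4) ℝ, IsFiniteCamera P₂ ∧
      ∃ w : Fin m → Fin 3 → ℝ, ∀ i,
        SimEq ((cam 1 0).mulVec (hat (w i))) (hat (x i)) ∧
        SimEq (P₂.mulVec (hat (w i))) (hat (y i)) := by
  classical
  choose c₁ hc₁ hxe using hx
  choose c₂ hc₂ hye using hy
  have hu0 : ∀ i, (Fin.init (ω i)) ≠ 0 := by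
    intro i
    rw [hxe i]
    exact smul_ne_zero (hc₁ i) (hat_ne_zero _)
  have hκcond : Fin.init κ ≠ 0 ∨ κ (Fin.last 3) ≠ 0 := by
    by_contra hcon
    push_neg at hcon
    apply hκ0
    funext i
    induction i using Fin.lastCases with
    | last => exact hcon.2
    | cast j => exact congrFun hcon.1 j
  obtain ⟨v, hv⟩ := avoid (ι := Option (Fin m))
      (fun o => o.elim (Fin.init κ) (fun i => Fin.init (ω i)))
      (fun o => o.elim (κ (Fin.last 3)) (fun i => ω i (Fin.last 3)))
      (by rintro (_ | i)
          · exact hκcond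
          · exact Or.inl (hu0 i))
  have hvκ : Fin.init κ ⬝ᵥ v ≠ κ (Fin.last 3) := hv none
  have hvi : ∀ i, Fin.init (ω i) ⬝ᵥ v ≠ ω i (Fin.last 3) := fun i => hv (some i)
  have hs0 : ∀ i, ω i (Fin.last 3) - Fin.init (ω i) ⬝ᵥ v ≠ 0 :=
    fun i => sub_ne_zero.2 (hvi i).symm
  set bQ : Fin 3 → ℝ := fun i => Q i (Fin.last 3) with hbQ
  set M : Matrix (Fin 3) (Fin 3) ℝ := leftBlock Q + vecMulVec bQ v with hM
  have hvmv : ∀ z : Fin 3 → ℝ, (vecMulVec bQ v).mulVec z = (v ⬝ᵥ z) • bQ := by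
    intro z
    funext i
    simp only [Matrix.mulVec, dotProduct, Matrix.vecMulVec_apply, Pi.smul_apply,
      smul_eq_mul]
    rw [Finset.sum_mul]
    exact Finset.sum_congr rfl fun j _ => by ring
  have key : ∀ (z : Fin 3 → ℝ) (r : ℝ),
      (cam M bQ).mulVec (Fin.snoc z r) = Q.mulVec (Fin.snoc z (v ⬝ᵥ z + r)) := by
    intro z r
    rw [mulVec_snoc, mulVec_snoc, leftBlock_cam, hM, Matrix.add_mulVec, hvmv]
    have hlast : (fun i => cam M bQ i (Fin.last 3)) = bQ := funext fun i => cam_last _ _ _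
    rw [hlast, ← hbQ, add_smul, add_assoc]
  have hMQ : ∀ z : Fin 3 → ℝ, M.mulVec z = Q.mulVec (Fin.snoc z (v ⬝ᵥ z)) := by
    intro z
    have h1 := key z 0
    rw [mulVec_snoc, leftBlock_cam] at h1
    simpa using h1
  have hfin : IsFiniteCamera (cam M bQ) := by
    rw [IsFiniteCamera, leftBlock_cam, ← Matrix.isUnit_iff_isUnit_det,
      ← Matrix.mulVec_surjective_iff_isUnit]
    intro z
    obtain ⟨ζ, hζ⟩ := hQs z
    have hd0 : v ⬝ᵥ Fin.init κ - κ (Fin.last 3) ≠ 0 := by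
      rw [dotProduct_comm]
      exact sub_ne_zero.2 hvκ
    set cc : ℝ := (ζ (Fin.last 3) - v ⬝ᵥ Fin.init ζ) / (v ⬝ᵥ Fin.init κ - κ (Fin.last 3))
      with hcc
    refine ⟨Fin.init ζ + cc • Fin.init κ, ?_⟩
    rw [hMQ]
    have hsn : Fin.snoc (Fin.init ζ + cc • Fin.init κ)
        (v ⬝ᵥ (Fin.init ζ + cc • Fin.init κ)) = ζ + cc • κ := by
      have hccd : cc * (v ⬝ᵥ Fin.init κ - κ (Fin.last 3))
          = ζ (Fin.last 3) - v ⬝ᵥ Fin.init ζ := div_mul_cancel₀ _ hd0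
      funext j
      induction j using Fin.lastCases with
      | last =>
        simp only [Fin.snoc_last, Pi.add_apply, Pi.smul_apply, smul_eq_mul,
          dotProduct_add, dotProduct_smul]
        linear_combination hccd
      | cast j =>
        simp [Fin.init]
    rw [hsn, Matrix.mulVec_add, Matrix.mulVec_smul, hζ, hκQ]
    simp
  refine ⟨cam M bQ, hfin, fun i => (ω i (Fin.last 3) - Fin.init (ω i) ⬝ᵥ v)⁻¹ • Fin.init (ω i),
    fun i => ⟨?_, ?_⟩⟩
  · refine ⟨(ω i (Fin.last 3) - Fin.init (ω i) ⬝ᵥ v)⁻¹ * c₁ i,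
      mul_ne_zero (inv_ne_zero (hs0 i)) (hc₁ i), ?_⟩
    rw [camOne_mulVec_hat, mul_smul, ← hxe i]
  · have hsnoc2 : Fin.snoc ((ω i (Fin.last 3) - Fin.init (ω i) ⬝ᵥ v)⁻¹ • Fin.init (ω i))
        (v ⬝ᵥ ((ω i (Fin.last 3) - Fin.init (ω i) ⬝ᵥ v)⁻¹ • Fin.init (ω i)) + 1)
        = (ω i (Fin.last 3) - Fin.init (ω i) ⬝ᵥ v)⁻¹ • ω i := by
      funext j
      induction j using Fin.lastCases with
      | last =>
        simp only [Fin.snoc_last, Pi.smul_apply, smul_eq_mul, dotProduct_smul]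
        have h1 : v ⬝ᵥ Fin.init (ω i) = Fin.init (ω i) ⬝ᵥ v := dotProduct_comm _ _
        rw [h1]
        have h2 : (ω i (Fin.last 3) - Fin.init (ω i) ⬝ᵥ v)⁻¹ * ω i (Fin.last 3)
            - (ω i (Fin.last 3) - Fin.init (ω i) ⬝ᵥ v)⁻¹ * (Fin.init (ω i) ⬝ᵥ v) = 1 := by
          rw [← mul_sub]
          exact inv_mul_cancel₀ (hs0 i)
        linarith
      | cast j =>
        simp [Fin.init]
    have h2 : (cam M bQ).mulVec (hat ((ω i (Fin.last 3) - Fin.init (ω i) ⬝ᵥ v)⁻¹ • Fin.init (ω i)))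
        = Q.mulVec ((ω i (Fin.last 3) - Fin.init (ω i) ⬝ᵥ v)⁻¹ • ω i) := by
      rw [hat, key, hsnoc2]
    rw [h2, Matrix.mulVec_smul, hye i, smul_smul]
    exact ⟨(ω i (Fin.last 3) - Fin.init (ω i) ⬝ᵥ v)⁻¹ * c₂ i,
      mul_ne_zero (inv_ne_zero (hs0 i)) (hc₂ i), rfl⟩

lemma one_to_four (m : ℕ) (x y : Fin m → Fin 2 → ℝ)
    (h : ∃ P₁ P₂ : Matrix (Fin 3) (Fin 4) ℝ, IsCamera P₁ ∧ IsCamera P₂ ∧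
          ∃ w : Fin m → Fin 4 → ℝ, ∀ i, w i ≠ 0 ∧
            SimEq (P₁.mulVec (w i)) (hat (x i)) ∧ SimEq (P₂.mulVec (w i)) (hat (y i))) :
    ∃ P₂ : Matrix (Fin 3) (Fin 4) ℝ, IsFiniteCamera P₂ ∧
      ∃ w : Fin m → Fin 3 → ℝ, ∀ i,
        SimEq ((cam 1 0).mulVec (hat (w i))) (hat (x i)) ∧
        SimEq (P₂.mulVec (hat (w i))) (hat (y i)) := by
  classical
  obtain ⟨P₁, P₂, h₁, h₂, w, hw⟩ := h
  obtain ⟨k, hk0, hk⟩ := camera_ker h₁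
  obtain ⟨k₂, hk₂0, hk₂⟩ := camera_ker h₂
  choose g hg using fun j : Fin 3 => camera_surj h₁ (Pi.single j 1)
  set colH : Fin 4 → Fin 4 → ℝ := Fin.snoc g k with hcolH
  set H : Matrix (Fin 4) (Fin 4) ℝ := Matrix.of fun i j => colH j i with hH
  have hPH : P₁ * H = cam 1 0 := by
    ext i j
    induction j using Fin.lastCases with
    | last =>
      have he : (P₁ * H) i (Fin.last 3) = P₁.mulVec k i := by
        simp only [Matrix.mul_apply, Matrix.mulVec, dotProduct, hH, hcolH, Matrix.of_apply,
          Fin.snoc_last]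
      rw [he, hk, cam_last]
    | cast j =>
      have he : (P₁ * H) i j.castSucc = P₁.mulVec (g j) i := by
        simp [Matrix.mul_apply, Matrix.mulVec, dotProduct, hH, hcolH]
      rw [he, hg j]
      simp [cam, Matrix.one_apply, Pi.single_apply]
  have hdet : IsUnit H.det := by
    rw [← Matrix.isUnit_iff_isUnit_det, ← Matrix.mulVec_injective_iff_isUnit]
    have hinj0 : ∀ c : Fin 4 → ℝ, H.mulVec c = 0 → c = 0 := by
      intro c hc
      have h1 : (cam 1 0).mulVec c = 0 := by
        rw [← hPH, ← Matrix.mulVec_mulVec, hc, Matrix.mulVec_zero]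
      rw [camOne_mulVec] at h1
      have h2 : ∀ j : Fin 3, c j.castSucc = 0 := fun j => congrFun h1 j
      have h3 : H.mulVec c = c (Fin.last 3) • k := by
        funext i
        have he : H.mulVec c i = ∑ j : Fin 3, g j i * c j.castSucc + k i * c (Fin.last 3) := by
          simp only [Matrix.mulVec, dotProduct, hH, hcolH, Fin.sum_univ_castSucc, Matrix.of_apply,
            Fin.snoc_last, Fin.snoc_castSucc]
        rw [he]
        simp [h2, mul_comm]
      rw [hc] at h3
      obtain ⟨i₀, hi₀⟩ := Function.ne_iff.1 hk0
      simp only [Pi.zero_apply] at hi₀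
      have h4 : c (Fin.last 3) = 0 := by
        have h5 := congrFun h3 i₀
        simp only [Pi.zero_apply, Pi.smul_apply, smul_eq_mul] at h5
        rcases mul_eq_zero.1 h5.symm with h | h
        · exact h
        · exact absurd h hi₀
      funext i
      induction i using Fin.lastCases with
      | last => exact h4
      | cast j => exact h2 j
    intro a b hab
    have h6 : a - b = 0 := hinj0 _ (by rw [Matrix.mulVec_sub, hab, sub_self])
    exact sub_eq_zero.1 h6
  have hHH : H * H⁻¹ = 1 := Matrix.mul_nonsing_inv _ hdet
  have cancel : ∀ (N : Matrix (Fin 3) (Fin 4) ℝ) (z : Fin 4 → ℝ),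
      (N * H).mulVec (H⁻¹.mulVec z) = N.mulVec z := by
    intro N z
    rw [Matrix.mulVec_mulVec, Matrix.mul_assoc, hHH, Matrix.mul_one]
  have hQs : Function.Surjective (P₂ * H).mulVec := by
    intro z
    obtain ⟨ζ, hζ⟩ := camera_surj h₂ z
    exact ⟨H⁻¹.mulVec ζ, by rw [cancel, hζ]⟩
  have hκQ : (P₂ * H).mulVec (H⁻¹.mulVec k₂) = 0 := by rw [cancel, hk₂]
  have hκ0 : H⁻¹.mulVec k₂ ≠ 0 := by
    intro h0
    apply hk₂0
    have h7 : H.mulVec (H⁻¹.mulVec k₂) = k₂ := by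
      rw [Matrix.mulVec_mulVec, hHH, Matrix.one_mulVec]
    rw [← h7, h0, Matrix.mulVec_zero]
  refine normalizeCam (P₂ * H) hQs (H⁻¹.mulVec k₂) hκQ hκ0 m x y
      (fun i => H⁻¹.mulVec (w i)) (fun i => ?_) (fun i => ?_)
  · have h8 : Fin.init (H⁻¹.mulVec (w i)) = P₁.mulVec (w i) := by
      rw [← camOne_mulVec, ← hPH, cancel]
    rw [h8]
    exact (hw i).2.1
  · have h9 : (P₂ * H).mulVec (H⁻¹.mulVec (w i)) = P₂.mulVec (w i) := cancel _ _
    rw [h9]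
    exact (hw i).2.2

/-- The four versions of the projective reconstruction problem are equivalent. -/
theorem stmt3 (m : ℕ) (x y : Fin m → Fin 2 → ℝ) :
    List.TFAE
      [ (∃ P₁ P₂ : Matrix (Fin 3) (Fin 4) ℝ, IsCamera P₁ ∧ IsCamera P₂ ∧
          ∃ w : Fin m → Fin 4 → ℝ, ∀ i, w i ≠ 0 ∧
            SimEq (P₁.mulVec (w i)) (hat (x i)) ∧ SimEq (P₂.mulVec (w i)) (hat (y i))),
        (∃ P₁ P₂ : Matrix (Fin 3) (Fin 4) ℝ, IsFiniteCamera P₁ ∧ IsFiniteCamera P₂ ∧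
          ∃ w : Fin m → Fin 4 → ℝ, ∀ i, w i ≠ 0 ∧
            SimEq (P₁.mulVec (w i)) (hat (x i)) ∧ SimEq (P₂.mulVec (w i)) (hat (y i))),
        (∃ P₁ P₂ : Matrix (Fin 3) (Fin 4) ℝ, IsFiniteCamera P₁ ∧ IsFiniteCamera P₂ ∧
          ∃ w : Fin m → Fin 3 → ℝ, ∀ i,
            SimEq (P₁.mulVec (hat (w i))) (hat (x i)) ∧
            SimEq (P₂.mulVec (hat (w i))) (hat (y i))),
        (∃ P₂ : Matrix (Fin 3) (Fin 4) ℝ, IsFiniteCamera P₂ ∧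
          ∃ w : Fin m → Fin 3 → ℝ, ∀ i,
            SimEq ((cam 1 0).mulVec (hat (w i))) (hat (x i)) ∧
            SimEq (P₂.mulVec (hat (w i))) (hat (y i))) ] := by
  tfae_have 4 → 3 := by
    rintro ⟨P₂, h₂, w, hw⟩
    exact ⟨cam 1 0, P₂, by rw [IsFiniteCamera, leftBlock_cam]; simp, h₂, w, hw⟩
  tfae_have 3 → 2 := by
    rintro ⟨P₁, P₂, h₁, h₂, w, hw⟩
    exact ⟨P₁, P₂, h₁, h₂, fun i => hat (w i),
      fun i => ⟨hat_ne_zero _, (hw i).1, (hw i).2⟩⟩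
  tfae_have 2 → 1 := by
    rintro ⟨P₁, P₂, h₁, h₂, w, hw⟩
    exact ⟨P₁, P₂, isCamera_of_finite h₁, isCamera_of_finite h₂, w, hw⟩
  tfae_have 1 → 4 := one_to_four m x y
  tfae_finish
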